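/- arXiv:2105.11558 — 3 statements merged into one kernel-verified Lean document; each statement's English description precedes it below -/
import Mathlib

section
/- Let Y be a real-valued random variable with zero mean satisfying the sub-Gaussian tail bound P(|Y| ≥ t) ≤ 2 exp(−t²/(2ν²)) for all t ≥ 0, for some ν > 0. Then for every λ with 0 ≤ λ ≤ 1/(4ν²), one has E[exp(λ Y²)] ≤ 1 + 8 λ ν². -/
open MeasureTheory Real Set

/-- If `Y` is a centered real random variable with sub-Gaussian tails
`P(|Y| ≥ t) ≤ 2 exp(−t²/(2ν²))`, then for `0 ≤ λ ≤ 1/(4ν²)` one has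
`E[exp(λ Y²)] ≤ 1 + 8 λ ν²`. -/
theorem tail_integration
    {Ω : Type} [MeasurableSpace Ω] (μ : Measure Ω) [IsProbabilityMeasure μ]
    (Y : Ω → ℝ) (hY : Measurable Y) (ν : ℝ) (hν : 0 < ν)
    (hmean : ∫ ω, Y ω ∂μ = 0)
    (htail : ∀ t : ℝ, 0 ≤ t → (μ {ω | t ≤ |Y ω|}).toReal ≤ 2 * Real.exp (-t ^ 2 / (2 * ν ^ 2)))
    (lam : ℝ) (hlam0 : 0 ≤ lam) (hlam : lam ≤ 1 / (4 * ν ^ 2)) :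
    ∫ ω, Real.exp (lam * (Y ω) ^ 2) ∂μ ≤ 1 + 8 * lam * ν ^ 2 := by
  have hν2 : (0:ℝ) < ν ^ 2 := by positivity
  set c : ℝ := 1 / (2 * ν ^ 2) - lam with hc
  have hc4 : 1 / (4 * ν ^ 2) ≤ c := by
    rw [hc]
    have : 1 / (4 * ν ^ 2) + 1 / (4 * ν ^ 2) = 1 / (2 * ν ^ 2) := by
      field_simp; ring
    linarith
  have hcpos : 0 < c := lt_of_lt_of_le (by positivity) hc4
  -- layer cake setup
  have f_nn : 0 ≤ᵐ[μ] fun ω => (Y ω) ^ 2 := Filter.Eventually.of_forall fun ω => sq_nonneg _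
  have f_mble : AEMeasurable (fun ω => (Y ω) ^ 2) μ := (hY.pow_const 2).aemeasurable
  have g_cont : Continuous (fun t : ℝ => lam * Real.exp (lam * t)) := by continuity
  have g_intble : ∀ t > (0:ℝ), IntervalIntegrable (fun t : ℝ => lam * Real.exp (lam * t)) volume 0 t :=
    fun t _ => g_cont.intervalIntegrable 0 t
  have g_nn : ∀ᵐ t ∂(volume.restrict (Ioi (0:ℝ))), 0 ≤ lam * Real.exp (lam * t) :=
    Filter.Eventually.of_forall fun t => mul_nonneg hlam0 (Real.exp_pos _).le
  have key := lintegral_comp_eq_lintegral_meas_le_mul μ f_nn f_mble g_intble g_nn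
  have hG : ∀ x : ℝ, (∫ t in (0:ℝ)..x, lam * Real.exp (lam * t)) = Real.exp (lam * x) - 1 := by
    intro x
    have hderiv : ∀ y ∈ uIcc (0:ℝ) x,
        HasDerivAt (fun t => Real.exp (lam * t)) (lam * Real.exp (lam * y)) y := by
      intro y _
      have := (Real.hasDerivAt_exp (lam * y)).comp y ((hasDerivAt_id y).const_mul lam)
      simpa [mul_comm, Function.comp_def] using this
    simpa using intervalIntegral.integral_deriv_eq_sub hderiv (g_cont.intervalIntegrable 0 x)
  simp_rw [hG] at key
  -- tail bound on measures
  have tail2 : ∀ t : ℝ, 0 < t →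
      μ {a | t ≤ (Y a) ^ 2} ≤ ENNReal.ofReal (2 * Real.exp (-t / (2 * ν ^ 2))) := by
    intro t ht
    have hsub : {a | t ≤ (Y a) ^ 2} ⊆ {a | Real.sqrt t ≤ |Y a|} := by
      intro a ha
      have : Real.sqrt t ≤ Real.sqrt ((Y a) ^ 2) := Real.sqrt_le_sqrt ha
      simpa [Real.sqrt_sq_eq_abs] using this
    have h1 := htail (Real.sqrt t) (Real.sqrt_nonneg t)
    rw [Real.sq_sqrt ht.le] at h1
    calc μ {a | t ≤ (Y a) ^ 2} ≤ μ {a | Real.sqrt t ≤ |Y a|} := measure_mono hsub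
      _ ≤ ENNReal.ofReal (2 * Real.exp (-t / (2 * ν ^ 2))) := by
          rw [ENNReal.le_ofReal_iff_toReal_le (measure_ne_top μ _) (by positivity)]
          exact h1
  -- bound the RHS of the layer cake formula
  have step1 : ∫⁻ t in Ioi (0:ℝ), μ {a | t ≤ (Y a) ^ 2} * ENNReal.ofReal (lam * Real.exp (lam * t))
      ≤ ∫⁻ t in Ioi (0:ℝ), ENNReal.ofReal (2 * lam * Real.exp (-(c * t))) := by
    apply setLIntegral_mono' measurableSet_Ioi
    intro t ht
    calc μ {a | t ≤ (Y a) ^ 2} * ENNReal.ofReal (lam * Real.exp (lam * t))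
        ≤ ENNReal.ofReal (2 * Real.exp (-t / (2 * ν ^ 2))) * ENNReal.ofReal (lam * Real.exp (lam * t)) :=
          mul_le_mul_left (tail2 t ht) _
      _ = ENNReal.ofReal (2 * lam * Real.exp (-(c * t))) := by
          rw [← ENNReal.ofReal_mul (by positivity)]
          congr 1
          have hexp : -((1 / (2 * ν ^ 2) - lam) * t) = -t / (2 * ν ^ 2) + lam * t := by ring
          rw [hc, hexp, Real.exp_add]
          ring
  -- compute the exponential integral
  have hint : IntegrableOn (fun t : ℝ => 2 * lam * Real.exp (-(c * t))) (Ioi (0:ℝ)) volume := by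
    have := (exp_neg_integrableOn_Ioi 0 hcpos)
    simpa [neg_mul, IntegrableOn] using this.const_mul (2 * lam)
  have hval : ∫ t in Ioi (0:ℝ), 2 * lam * Real.exp (-(c * t)) = 2 * lam * c⁻¹ := by
    rw [MeasureTheory.integral_const_mul]
    congr 1
    have := integral_comp_mul_left_Ioi (fun y => Real.exp (-y)) 0 hcpos
    simp only [mul_zero] at this
    rw [this, integral_exp_neg_Ioi_zero, smul_eq_mul, mul_one]
  have step2 : ∫⁻ t in Ioi (0:ℝ), ENNReal.ofReal (2 * lam * Real.exp (-(c * t)))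
      = ENNReal.ofReal (2 * lam * c⁻¹) := by
    rw [← MeasureTheory.ofReal_integral_eq_lintegral_ofReal hint
      (Filter.Eventually.of_forall fun t => by positivity), hval]
  have hbound : (2:ℝ) * lam * c⁻¹ ≤ 8 * lam * ν ^ 2 := by
    have hcinv : c⁻¹ ≤ 4 * ν ^ 2 := by
      rw [← one_div]
      rw [div_le_iff₀ hcpos]
      calc (1:ℝ) = (4 * ν ^ 2) * (1 / (4 * ν ^ 2)) := by field_simp
        _ ≤ (4 * ν ^ 2) * c := by
            apply mul_le_mul_of_nonneg_left hc4 (by positivity)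
    calc 2 * lam * c⁻¹ ≤ 2 * lam * (4 * ν ^ 2) := by
          apply mul_le_mul_of_nonneg_left hcinv (by positivity)
      _ = 8 * lam * ν ^ 2 := by ring
  -- so the lintegral of the positive part is finite and bounded
  have hItop : ∫⁻ ω, ENNReal.ofReal (Real.exp (lam * (Y ω) ^ 2) - 1) ∂μ
      ≤ ENNReal.ofReal (8 * lam * ν ^ 2) := by
    rw [key]
    refine le_trans step1 ?_
    rw [step2]
    exact ENNReal.ofReal_le_ofReal hbound
  have h_nn : 0 ≤ᵐ[μ] fun ω => Real.exp (lam * (Y ω) ^ 2) - 1 :=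
    Filter.Eventually.of_forall fun ω => by
      have h1 : (1:ℝ) ≤ Real.exp (lam * (Y ω) ^ 2) := by
        rw [← Real.exp_zero]
        exact Real.exp_le_exp.mpr (by positivity)
      simp only [Pi.zero_apply]
      linarith
  have h_mble : Measurable fun ω => Real.exp (lam * (Y ω) ^ 2) - 1 :=
    (((hY.pow_const 2).const_mul lam).exp).sub measurable_const
  have h_int : Integrable (fun ω => Real.exp (lam * (Y ω) ^ 2) - 1) μ := by
    refine ⟨h_mble.aestronglyMeasurable, ?_⟩
    rw [hasFiniteIntegral_iff_ofReal h_nn]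
    exact lt_of_le_of_lt hItop ENNReal.ofReal_lt_top
  have h_int' : Integrable (fun ω => Real.exp (lam * (Y ω) ^ 2)) μ := by
    have h := h_int.add (integrable_const (1:ℝ))
    exact h.congr (Filter.Eventually.of_forall fun ω => by simp)
  have hval2 : ∫ ω, (Real.exp (lam * (Y ω) ^ 2) - 1) ∂μ
      = (∫⁻ ω, ENNReal.ofReal (Real.exp (lam * (Y ω) ^ 2) - 1) ∂μ).toReal :=
    integral_eq_lintegral_of_nonneg_ae h_nn h_mble.aestronglyMeasurable
  have hsplit : ∫ ω, (Real.exp (lam * (Y ω) ^ 2) - 1) ∂μ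
      = ∫ ω, Real.exp (lam * (Y ω) ^ 2) ∂μ - 1 := by
    rw [integral_sub h_int' (integrable_const 1)]
    simp
  have hle : (∫⁻ ω, ENNReal.ofReal (Real.exp (lam * (Y ω) ^ 2) - 1) ∂μ).toReal ≤ 8 * lam * ν ^ 2 :=
    ENNReal.toReal_le_of_le_ofReal (by positivity) hItop
  rw [hsplit] at hval2
  linarith
end

section
/- Let η_0, η_1, ..., η_t be i.i.d. random vectors in ℝ^d that are sub-Gaussian with parameter C_η σ² (in every unit direction), and let 0 ≤ ρ < 1. Define Y_{t+1} = Σ_{s=0}^{t} ρ^{t−s} ‖η_s‖². Then for any λ with 0 ≤ λ ≤ 1/(4 d C_η σ²), one has E[exp(λ Y_{t+1})] ≤ exp(8 λ d C_η σ² / (1−ρ)). -/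
open MeasureTheory ProbabilityTheory Real
open scoped RealInnerProductSpace

noncomputable section

abbrev EVec (d : ℕ) := EuclideanSpace ℝ (Fin d)

/-- Directional sub-Gaussianity with variance proxy `c`. -/
def SubGDir {Ω : Type} [MeasurableSpace Ω] (μ : Measure Ω) {d : ℕ} (Y : Ω → EVec d)
    (c : ℝ) : Prop :=
  ∀ x : EVec d, ‖x‖ = 1 → ∀ lam : ℝ,
    ∫ ω, Real.exp (lam * ⟪Y ω, x⟫) ∂μ ≤ Real.exp (c * lam ^ 2 / 2)

open scoped ENNReal

section AuxLemmas
open Set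


lemma aux_exp_tail_integral {ε : ℝ} (hε : 0 < ε) :
    ∫⁻ t in Set.Ioi (0:ℝ), ENNReal.ofReal (Real.exp (-ε * t)) = ENNReal.ofReal (1/ε) := by
  have hint : IntegrableOn (fun t => Real.exp (-ε * t)) (Set.Ioi (0:ℝ)) := by
    simpa using exp_neg_integrableOn_Ioi 0 hε
  rw [← ofReal_integral_eq_lintegral_ofReal hint (by
      filter_upwards with x using (Real.exp_pos _).le)]
  congr 1
  have : ∫ t in Set.Ioi (0:ℝ), Real.exp (-ε * t) = 0 - (-Real.exp (-ε * 0) / ε) := by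
    apply integral_Ioi_of_hasDerivAt_of_tendsto
      (f := fun t => -Real.exp (-ε * t) / ε)
    · exact (Continuous.continuousWithinAt (by continuity))
    · intro x hx
      have : HasDerivAt (fun t : ℝ => -Real.exp (-ε * t) / ε)
          (-(Real.exp (-ε * id x) * (-ε * 1)) / ε) x :=
        (((hasDerivAt_id x).const_mul (-ε)).exp.neg).div_const ε
      refine this.congr_deriv ?_
      simp only [id_eq, mul_one, mul_neg, neg_neg]; rw [mul_div_cancel_right₀ _ hε.ne']
    · exact hint
    · have hm : Filter.Tendsto (fun t : ℝ => ε * t) Filter.atTop Filter.atTop :=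
        Filter.Tendsto.const_mul_atTop hε Filter.tendsto_id
      have he : Filter.Tendsto (fun t : ℝ => Real.exp (-ε * t)) Filter.atTop (nhds 0) := by
        have := Real.tendsto_exp_neg_atTop_nhds_zero.comp hm
        simpa [Function.comp_def, neg_mul] using this
      have h2 := (he.neg).div_const ε
      simpa using h2
  rw [this]
  simp [div_eq_mul_inv]

lemma sq_mgf_bound {Ω : Type} [MeasurableSpace Ω] {μ : Measure Ω} [IsProbabilityMeasure μ]
    {X : Ω → ℝ} (hX : Measurable X) {v : ℝ} (hv : 0 < v)
    (hmgf : ∀ u : ℝ, Integrable (fun ω => Real.exp (u * X ω)) μ ∧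
      ∫ ω, Real.exp (u * X ω) ∂μ ≤ Real.exp (v * u ^ 2 / 2))
    {b : ℝ} (hb0 : 0 ≤ b) (hb : b ≤ 1 / (4 * v)) :
    ∫⁻ ω, ENNReal.ofReal (Real.exp (b * X ω ^ 2)) ∂μ ≤ ENNReal.ofReal (Real.exp (8 * b * v)) := by
  rcases hb0.eq_or_lt with rfl | hbpos
  · simp
  -- one-sided Chernoff tail
  have one : ∀ (Y : Ω → ℝ), (∀ u : ℝ, Integrable (fun ω => Real.exp (u * Y ω)) μ ∧
      ∫ ω, Real.exp (u * Y ω) ∂μ ≤ Real.exp (v * u ^ 2 / 2)) →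
      ∀ r : ℝ, 0 ≤ r → μ {ω | r ≤ Y ω} ≤ ENNReal.ofReal (Real.exp (-(r^2) / (2*v))) := by
    intro Y hY r hr
    have hch := measure_ge_le_exp_mul_mgf (X := Y) (μ := μ) (t := r / v) r
      (by positivity) (hY (r/v)).1
    have hmgf' : mgf Y μ (r/v) ≤ Real.exp (v * (r/v)^2 / 2) := (hY (r/v)).2
    have hkey : (μ {ω | r ≤ Y ω}).toReal ≤ Real.exp (-(r^2) / (2*v)) := by
      calc (μ {ω | r ≤ Y ω}).toReal ≤ Real.exp (-(r/v) * r) * mgf Y μ (r/v) := hch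
        _ ≤ Real.exp (-(r/v) * r) * Real.exp (v * (r/v)^2 / 2) := by
            have := (Real.exp_pos (-(r/v)*r)).le
            gcongr
        _ = Real.exp (-(r^2) / (2*v)) := by
            rw [← Real.exp_add]; congr 1; field_simp; ring
    rw [← ENNReal.ofReal_toReal (measure_ne_top μ _)]
    exact ENNReal.ofReal_le_ofReal hkey
  have hmgfneg : ∀ u : ℝ, Integrable (fun ω => Real.exp (u * (-X ω))) μ ∧
      ∫ ω, Real.exp (u * (-X ω)) ∂μ ≤ Real.exp (v * u ^ 2 / 2) := by
    intro u
    have := hmgf (-u)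
    constructor
    · simpa [neg_mul, mul_neg] using this.1
    · have h2 := this.2
      rw [show v * (-u)^2/2 = v * u^2/2 by ring] at h2
      simpa [neg_mul, mul_neg] using h2
  have tail : ∀ r : ℝ, 0 ≤ r →
      μ {ω | r ≤ |X ω|} ≤ ENNReal.ofReal (2 * Real.exp (-(r^2) / (2*v))) := by
    intro r hr
    have hsub : {ω | r ≤ |X ω|} ⊆ {ω | r ≤ X ω} ∪ {ω | r ≤ -X ω} := by
      intro ω hω
      have hω' : r ≤ |X ω| := hω
      rcases le_abs.mp hω' with h | h
      · exact Or.inl h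
      · exact Or.inr h
    calc μ {ω | r ≤ |X ω|} ≤ μ ({ω | r ≤ X ω} ∪ {ω | r ≤ -X ω}) := measure_mono hsub
      _ ≤ μ {ω | r ≤ X ω} + μ {ω | r ≤ -X ω} := measure_union_le _ _
      _ ≤ ENNReal.ofReal (Real.exp (-(r^2) / (2*v))) +
          ENNReal.ofReal (Real.exp (-(r^2) / (2*v))) :=
        add_le_add (one X hmgf r hr) (one (fun ω => -X ω) hmgfneg r hr)
      _ = ENNReal.ofReal (2 * Real.exp (-(r^2) / (2*v))) := by
        rw [← ENNReal.ofReal_add (Real.exp_pos _).le (Real.exp_pos _).le]; ring_nf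
  -- layer cake
  set ε : ℝ := 1/(2*v) - b with hεdef
  have hε : 0 < ε := by
    have : b < 1/(2*v) := lt_of_le_of_lt hb (by rw [one_div, one_div]; gcongr; linarith)
    simpa [hεdef] using sub_pos.mpr this
  have hε4 : 1/(4*v) ≤ ε := by
    have : b ≤ 1/(4*v) := hb
    have h24 : 1/(2*v) - 1/(4*v) = 1/(4*v) := by field_simp; ring
    simp only [hεdef]; linarith
  have gcont : Continuous fun s : ℝ => b * Real.exp (b * s) := by
    exact continuous_const.mul (Real.continuous_exp.comp (continuous_const.mul continuous_id))
  have ftc : ∀ c : ℝ, ∫ s in (0:ℝ)..c, b * Real.exp (b * s) = Real.exp (b * c) - 1 := by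
    intro c
    have h := intervalIntegral.integral_eq_sub_of_hasDerivAt
      (f := fun s : ℝ => Real.exp (b * s)) (f' := fun s : ℝ => b * Real.exp (b * s))
      (a := 0) (b := c) ?_ ?_
    · rw [h]; simp
    · intro x hx
      have : HasDerivAt (fun s : ℝ => Real.exp (b * s)) (Real.exp (b * id x) * (b * 1)) x :=
        ((hasDerivAt_id x).const_mul b).exp
      refine this.congr_deriv ?_
      simp only [id_eq, mul_one]; ring
    · exact (gcont.intervalIntegrable _ _)
  have layer := lintegral_comp_eq_lintegral_meas_le_mul μ
    (f := fun ω => X ω ^ 2) (g := fun t => b * Real.exp (b * t))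
    (Filter.Eventually.of_forall fun ω => sq_nonneg _)
    ((hX.pow_const 2).aemeasurable)
    (fun t _ => (gcont.intervalIntegrable _ _))
    (Filter.Eventually.of_forall fun t => by positivity)
  have expand : ∀ ω, ENNReal.ofReal (Real.exp (b * X ω ^ 2)) =
      ENNReal.ofReal (∫ s in (0:ℝ)..(X ω ^ 2), b * Real.exp (b * s)) + 1 := by
    intro ω
    rw [ftc, ← ENNReal.ofReal_one, ← ENNReal.ofReal_add (by
      have : (1:ℝ) ≤ Real.exp (b * X ω ^2) := Real.one_le_exp (by positivity)
      linarith) zero_le_one]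
    ring_nf
  calc ∫⁻ ω, ENNReal.ofReal (Real.exp (b * X ω ^ 2)) ∂μ
      = ∫⁻ ω, (ENNReal.ofReal (∫ s in (0:ℝ)..(X ω ^ 2), b * Real.exp (b * s)) + 1) ∂μ := by
        exact lintegral_congr expand
    _ = (∫⁻ ω, ENNReal.ofReal (∫ s in (0:ℝ)..(X ω ^ 2), b * Real.exp (b * s)) ∂μ) + 1 := by
        rw [lintegral_add_right _ measurable_const, lintegral_const, one_mul, measure_univ]
    _ = (∫⁻ t in Set.Ioi (0:ℝ), μ {a | t ≤ X a ^ 2} * ENNReal.ofReal (b * Real.exp (b * t))) + 1 := by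
        rw [layer]
    _ ≤ (∫⁻ t in Set.Ioi (0:ℝ), ENNReal.ofReal (2*b) * ENNReal.ofReal (Real.exp (-ε * t))) + 1 := by
        refine add_le_add_left ?_ 1
        apply lintegral_mono_ae
        filter_upwards [ae_restrict_mem measurableSet_Ioi] with t ht
        have ht0 : (0:ℝ) ≤ t := le_of_lt ht
        have hsub2 : {a | t ≤ X a ^ 2} ⊆ {ω | Real.sqrt t ≤ |X ω|} := by
          intro ω hω
          have := Real.sqrt_le_sqrt hω
          rwa [Real.sqrt_sq_eq_abs] at this
        calc μ {a | t ≤ X a ^ 2} * ENNReal.ofReal (b * Real.exp (b * t))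
            ≤ ENNReal.ofReal (2 * Real.exp (-((Real.sqrt t)^2) / (2*v))) *
              ENNReal.ofReal (b * Real.exp (b * t)) := by
              gcongr
              exact le_trans (measure_mono hsub2) (tail _ (Real.sqrt_nonneg t))
          _ = ENNReal.ofReal (2*b) * ENNReal.ofReal (Real.exp (-ε * t)) := by
              rw [← ENNReal.ofReal_mul (by positivity), ← ENNReal.ofReal_mul (by positivity)]
              congr 1
              rw [Real.sq_sqrt ht0,
                show -ε * t = -t/(2*v) + b*t by simp only [hεdef]; field_simp; ring,
                Real.exp_add]
              ring
    _ = ENNReal.ofReal (2*b) * ENNReal.ofReal (1/ε) + 1 := by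
        rw [lintegral_const_mul' _ _ ENNReal.ofReal_ne_top, aux_exp_tail_integral hε]
    _ ≤ ENNReal.ofReal (Real.exp (8 * b * v)) := by
        rw [← ENNReal.ofReal_mul (by positivity)]
        have h1 : 2*b*(1/ε) ≤ 8*b*v := by
          have hinv : 1/ε ≤ 4*v := by
            calc 1/ε ≤ 1/(1/(4*v)) := one_div_le_one_div_of_le (by positivity) hε4
              _ = 4*v := one_div_one_div _
          calc 2*b*(1/ε) ≤ 2*b*(4*v) := by gcongr
            _ = 8*b*v := by ring
        calc ENNReal.ofReal (2*b*(1/ε)) + 1 ≤ ENNReal.ofReal (8*b*v) + ENNReal.ofReal 1 := by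
              rw [ENNReal.ofReal_one]; exact add_le_add (ENNReal.ofReal_le_ofReal h1) le_rfl
          _ = ENNReal.ofReal (8*b*v + 1) := by
              rw [ENNReal.ofReal_add (by positivity) zero_le_one]
          _ ≤ ENNReal.ofReal (Real.exp (8*b*v)) := by
              exact ENNReal.ofReal_le_ofReal (by linarith [Real.add_one_le_exp (8*b*v)])

lemma vec_mgf_bound {Ω : Type} [MeasurableSpace Ω] {μ : Measure Ω} [IsProbabilityMeasure μ]
    {d : ℕ} (hd : 0 < d) {Y : Ω → EVec d} (hY : Measurable Y) {v : ℝ} (hv : 0 < v)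
    (hmgf : ∀ i : Fin d, ∀ u : ℝ, Integrable (fun ω => Real.exp (u * Y ω i)) μ ∧
        ∫ ω, Real.exp (u * Y ω i) ∂μ ≤ Real.exp (v * u ^ 2 / 2))
    {a : ℝ} (ha0 : 0 ≤ a) (ha : a * d ≤ 1 / (4 * v)) :
    ∫⁻ ω, ENNReal.ofReal (Real.exp (a * ‖Y ω‖ ^ 2)) ∂μ ≤
      ENNReal.ofReal (Real.exp (8 * (a * d) * v)) := by
  have hdR : (0:ℝ) < (d:ℝ) := by exact_mod_cast hd
  have hYi : ∀ i : Fin d, Measurable fun ω => Y ω i :=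
    fun i => (measurable_pi_apply i).comp ((WithLp.measurable_ofLp 2 _).comp hY)
  have hnorm : ∀ ω, ‖Y ω‖ ^ 2 = ∑ i, (Y ω i) ^ 2 := by
    intro ω
    rw [EuclideanSpace.norm_eq, Real.sq_sqrt (Finset.sum_nonneg fun i _ => sq_nonneg _)]
    simp [Real.norm_eq_abs, sq_abs]
  have jensen : ∀ ω, Real.exp (a * ‖Y ω‖ ^ 2) ≤
      ∑ i, (1/(d:ℝ)) * Real.exp ((a * d) * (Y ω i) ^ 2) := by
    intro ω
    have hsum : a * ‖Y ω‖ ^ 2 = ∑ i, (1/(d:ℝ)) • ((a * d) * (Y ω i) ^ 2) := by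
      rw [hnorm, Finset.mul_sum]
      apply Finset.sum_congr rfl
      intro i _
      simp only [smul_eq_mul]
      field_simp
    rw [hsum]
    have := convexOn_exp.map_sum_le (t := Finset.univ) (w := fun _ : Fin d => (1/(d:ℝ)))
      (p := fun i => (a * d) * (Y ω i) ^ 2) (fun i _ => by positivity)
      (by simp [Finset.sum_const, Finset.card_univ]; field_simp)
      (fun i _ => Set.mem_univ _)
    simpa [smul_eq_mul] using this
  have key : ∀ i : Fin d,
      ∫⁻ ω, ENNReal.ofReal (Real.exp ((a * d) * (Y ω i) ^ 2)) ∂μ ≤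
        ENNReal.ofReal (Real.exp (8 * (a * d) * v)) :=
    fun i => sq_mgf_bound (hYi i) hv (hmgf i) (by positivity) ha
  calc ∫⁻ ω, ENNReal.ofReal (Real.exp (a * ‖Y ω‖ ^ 2)) ∂μ
      ≤ ∫⁻ ω, ENNReal.ofReal (∑ i, (1/(d:ℝ)) * Real.exp ((a * d) * (Y ω i) ^ 2)) ∂μ :=
        lintegral_mono fun ω => ENNReal.ofReal_le_ofReal (jensen ω)
    _ = ∫⁻ ω, ∑ i, ENNReal.ofReal ((1/(d:ℝ)) * Real.exp ((a * d) * (Y ω i) ^ 2)) ∂μ := by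
        apply lintegral_congr
        intro ω
        exact ENNReal.ofReal_sum_of_nonneg fun i _ => by positivity
    _ = ∑ i, ∫⁻ ω, ENNReal.ofReal ((1/(d:ℝ)) * Real.exp ((a * d) * (Y ω i) ^ 2)) ∂μ := by
        apply lintegral_finset_sum
        intro i _
        exact (((((hYi i).pow_const 2).const_mul (a*d)).exp.const_mul _)).ennreal_ofReal
    _ = ∑ i : Fin d, ENNReal.ofReal (1/(d:ℝ)) *
          ∫⁻ ω, ENNReal.ofReal (Real.exp ((a * d) * (Y ω i) ^ 2)) ∂μ := by
        apply Finset.sum_congr rfl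
        intro i _
        rw [← lintegral_const_mul' _ _ ENNReal.ofReal_ne_top]
        apply lintegral_congr
        intro ω
        rw [← ENNReal.ofReal_mul (by positivity)]
    _ ≤ ∑ i : Fin d, ENNReal.ofReal (1/(d:ℝ)) * ENNReal.ofReal (Real.exp (8 * (a * d) * v)) := by
        apply Finset.sum_le_sum
        intro i _
        exact mul_le_mul_right (key i) _
    _ = ENNReal.ofReal (Real.exp (8 * (a * d) * v)) := by
        rw [Finset.sum_const, Finset.card_univ, Fintype.card_fin, nsmul_eq_mul,
          ← ENNReal.ofReal_natCast d, ← ENNReal.ofReal_mul (by positivity),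
          ← ENNReal.ofReal_mul (by positivity)]
        congr 1
        field_simp

lemma lintegral_prod_range_of_iIndep {Ω : Type} [MeasurableSpace Ω] {μ : Measure Ω}
    [IsProbabilityMeasure μ] {G : ℕ → Ω → ENNReal} (hmeas : ∀ s, Measurable (G s))
    (hindep : iIndepFun G μ) (n : ℕ) :
    ∫⁻ ω, ∏ s ∈ Finset.range n, G s ω ∂μ = ∏ s ∈ Finset.range n, ∫⁻ ω, G s ω ∂μ := by
  induction n with
  | zero => simp
  | succ n ih =>
    have hi := hindep.indepFun_prod_range_succ hmeas n
    have hmul := lintegral_mul_eq_lintegral_mul_lintegral_of_indepFun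
      (f := ∏ s ∈ Finset.range n, G s)
      (by rw [Finset.prod_fn]; exact Finset.measurable_prod _ fun s _ => hmeas s)
      (hmeas n) hi
    calc ∫⁻ ω, ∏ s ∈ Finset.range (n+1), G s ω ∂μ
        = ∫⁻ ω, ((∏ s ∈ Finset.range n, G s) * G n) ω ∂μ := by
          apply lintegral_congr
          intro ω
          simp [Finset.prod_range_succ, Finset.prod_apply]
      _ = (∫⁻ ω, (∏ s ∈ Finset.range n, G s) ω ∂μ) * ∫⁻ ω, G n ω ∂μ := hmul
      _ = (∫⁻ ω, ∏ s ∈ Finset.range n, G s ω ∂μ) * ∫⁻ ω, G n ω ∂μ := by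
          congr 1
          exact lintegral_congr fun ω => by simp [Finset.prod_apply]
      _ = ∏ s ∈ Finset.range (n+1), ∫⁻ ω, G s ω ∂μ := by
          rw [ih, Finset.prod_range_succ]

end AuxLemmas

/-- For i.i.d. centered `C_η σ²`-sub-Gaussian random vectors `η_s` in `ℝ^d`,
`0 ≤ ρ < 1` and `Y_{t+1} = Σ_{s=0}^t ρ^{t−s} ‖η_s‖²`, one has
`E[exp(λ Y_{t+1})] ≤ exp(8 λ d C_η σ²/(1−ρ))` for `0 ≤ λ ≤ 1/(4 d C_η σ²)`. -/
theorem geometric_noise_concentration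
    {Ω : Type} [MeasurableSpace Ω] (μ : Measure Ω) [IsProbabilityMeasure μ]
    {d : ℕ} (σ Cη : ℝ) (hσ : 0 < σ) (hCη : 0 < Cη)
    (ρ : ℝ) (hρ0 : 0 ≤ ρ) (hρ : ρ < 1)
    (η : ℕ → Ω → EVec d)
    (hηmeas : ∀ s, Measurable (η s))
    (hηindep : iIndepFun η μ)
    (hηid : ∀ s t, Measure.map (η s) μ = Measure.map (η t) μ)
    (hηmean : ∀ s i, ∫ ω, η s ω i ∂μ = 0)
    (hηsub : ∀ s, SubGDir μ (η s) (Cη * σ ^ 2))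
    (lam : ℝ) (hlam0 : 0 ≤ lam) (hlam : lam ≤ 1 / (4 * d * Cη * σ ^ 2)) (t : ℕ) :
    ∫ ω, Real.exp (lam * ∑ s ∈ Finset.range (t + 1), ρ ^ (t - s) * ‖η s ω‖ ^ 2) ∂μ ≤
      Real.exp (8 * lam * d * Cη * σ ^ 2 / (1 - ρ)) := by
  have h1ρ : 0 < 1 - ρ := by linarith
  -- trivial case lam = 0
  rcases hlam0.eq_or_lt with rfl | hlampos
  · simp
  -- trivial case d = 0
  rcases Nat.eq_zero_or_pos d with rfl | hd
  · have hz : ∀ s ω, ‖η s ω‖ = 0 := fun s ω => by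
      rw [EuclideanSpace.norm_eq]; simp
    simp [hz]
  have hdR : (0:ℝ) < (d:ℝ) := by exact_mod_cast hd
  set v : ℝ := Cη * σ ^ 2 with hvdef
  have hv : 0 < v := by positivity
  have hlamv : lam * d ≤ 1 / (4 * v) := by
    have h1 : lam * (d:ℝ) ≤ (1 / (4 * d * Cη * σ ^ 2)) * d := by gcongr
    calc lam * (d:ℝ) ≤ (1 / (4 * d * Cη * σ ^ 2)) * d := h1
      _ = 1 / (4 * v) := by rw [hvdef]; field_simp
  -- the ENNReal-valued factors
  set g : ℕ → EVec d → ENNReal :=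
    fun s y => ENNReal.ofReal (Real.exp (lam * ρ ^ (t - s) * ‖y‖ ^ 2)) with hgdef
  have hgmeas : ∀ s, Measurable (g s) :=
    fun s => (((measurable_norm.pow_const 2).const_mul _).exp).ennreal_ofReal
  set G : ℕ → Ω → ENNReal := fun s ω => g s (η s ω) with hGdef
  have hGmeas : ∀ s, Measurable (G s) := fun s => (hgmeas s).comp (hηmeas s)
  have hGindep : iIndepFun G μ := hηindep.comp g hgmeas
  -- measurability of integrand
  have hmeasSum : Measurable fun ω =>
      lam * ∑ s ∈ Finset.range (t+1), ρ ^ (t - s) * ‖η s ω‖ ^ 2 := by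
    apply Measurable.const_mul
    apply Finset.measurable_sum
    intro s _
    exact ((hηmeas s).norm.pow_const 2).const_mul _
  have hnn : 0 ≤ᵐ[μ] fun ω =>
      Real.exp (lam * ∑ s ∈ Finset.range (t+1), ρ ^ (t-s) * ‖η s ω‖^2) :=
    Filter.Eventually.of_forall fun ω => (Real.exp_pos _).le
  rw [integral_eq_lintegral_of_nonneg_ae hnn hmeasSum.exp.aestronglyMeasurable]
  -- pointwise factorization
  have hfac : ∀ ω, ENNReal.ofReal
      (Real.exp (lam * ∑ s ∈ Finset.range (t+1), ρ ^ (t-s) * ‖η s ω‖^2)) =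
      ∏ s ∈ Finset.range (t+1), G s ω := by
    intro ω
    rw [Finset.mul_sum]
    simp_rw [← mul_assoc]
    rw [Real.exp_sum, ENNReal.ofReal_prod_of_nonneg (fun s _ => (Real.exp_pos _).le)]
  have hLfac : ∫⁻ ω, ENNReal.ofReal
      (Real.exp (lam * ∑ s ∈ Finset.range (t+1), ρ ^ (t-s) * ‖η s ω‖^2)) ∂μ =
      ∏ s ∈ Finset.range (t+1), ∫⁻ ω, G s ω ∂μ := by
    rw [lintegral_congr hfac]
    exact lintegral_prod_range_of_iIndep hGmeas hGindep (t+1)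
  rw [hLfac]
  set F : ℕ → ENNReal := fun s => ∫⁻ ω, G s ω ∂μ with hFdef
  have hF1 : ∀ s, 1 ≤ F s := by
    intro s
    have : ∀ ω, (1:ENNReal) ≤ G s ω := by
      intro ω
      rw [hGdef]
      simp only
      rw [hgdef]
      simp only
      rw [← ENNReal.ofReal_one]
      exact ENNReal.ofReal_le_ofReal (Real.one_le_exp (by positivity))
    calc (1:ENNReal) = ∫⁻ _, 1 ∂μ := by simp
      _ ≤ ∫⁻ ω, G s ω ∂μ := lintegral_mono this
  rcases eq_or_ne (∏ s ∈ Finset.range (t+1), F s) ∞ with hL | hL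
  · rw [hL]
    simp only [ENNReal.toReal_top]
    exact (Real.exp_pos _).le
  -- factor at s = t is finite, hence all ‖η s‖² have finite exp-lintegral
  have hFt : F t ≠ ∞ := by
    have : F t ≤ ∏ s ∈ Finset.range (t+1), F s :=
      Finset.single_le_prod' (fun s _ => hF1 s) (Finset.self_mem_range_succ t)
    exact ne_top_of_le_ne_top hL this
  have hAt : ∫⁻ ω, ENNReal.ofReal (Real.exp (lam * ‖η t ω‖ ^ 2)) ∂μ ≠ ∞ := by
    have : F t = ∫⁻ ω, ENNReal.ofReal (Real.exp (lam * ‖η t ω‖ ^ 2)) ∂μ := by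
      apply lintegral_congr
      intro ω
      rw [hGdef]; simp only; rw [hgdef]; simp only [Nat.sub_self, pow_zero, mul_one]
    rwa [← this]
  have hAs : ∀ s, ∫⁻ ω, ENNReal.ofReal (Real.exp (lam * ‖η s ω‖ ^ 2)) ∂μ ≠ ∞ := by
    intro s
    have hφ : Measurable fun y : EVec d => ENNReal.ofReal (Real.exp (lam * ‖y‖ ^ 2)) :=
      (((measurable_norm.pow_const 2).const_mul _).exp).ennreal_ofReal
    have heq : ∫⁻ ω, ENNReal.ofReal (Real.exp (lam * ‖η s ω‖ ^ 2)) ∂μ =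
        ∫⁻ ω, ENNReal.ofReal (Real.exp (lam * ‖η t ω‖ ^ 2)) ∂μ := by
      rw [← lintegral_map hφ (hηmeas s), ← lintegral_map hφ (hηmeas t), hηid s t]
    rw [heq]; exact hAt
  -- coordinate MGF facts
  have hmgfall : ∀ s, ∀ i : Fin d, ∀ u : ℝ,
      Integrable (fun ω => Real.exp (u * η s ω i)) μ ∧
      ∫ ω, Real.exp (u * η s ω i) ∂μ ≤ Real.exp (v * u ^ 2 / 2) := by
    intro s i u
    have hcoord : Measurable fun ω => η s ω i := (measurable_pi_apply i).comp ((WithLp.measurable_ofLp 2 _).comp (hηmeas s))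
    have hptbd : ∀ ω, Real.exp (u * η s ω i) ≤
        Real.exp (u^2 / (4*lam)) * Real.exp (lam * ‖η s ω‖ ^ 2) := by
      intro ω
      rw [← Real.exp_add]
      apply Real.exp_le_exp.mpr
      have hsq : (η s ω i)^2 ≤ ‖η s ω‖^2 := by
        rw [EuclideanSpace.norm_eq, Real.sq_sqrt (Finset.sum_nonneg fun j _ => sq_nonneg _)]
        have := Finset.single_le_sum (f := fun j => ‖η s ω j‖^2)
          (fun j _ => sq_nonneg _) (Finset.mem_univ i)
        simpa [Real.norm_eq_abs, sq_abs] using this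
      have h4 : (0:ℝ) < 4 * lam := by linarith
      have hkey : u * η s ω i ≤ lam * (η s ω i)^2 + u^2/(4*lam) := by
        rw [← mul_le_mul_iff_right₀ h4]
        have hexp : 4 * lam * (lam * (η s ω i)^2 + u^2/(4*lam)) =
            4*lam^2*(η s ω i)^2 + u^2 := by field_simp
        rw [hexp]
        nlinarith [sq_nonneg (2 * lam * η s ω i - u)]
      linarith [mul_le_mul_of_nonneg_left hsq hlam0]
    constructor
    · constructor
      · exact ((hcoord.const_mul u).exp).aestronglyMeasurable
      · rw [hasFiniteIntegral_iff_ofReal (Filter.Eventually.of_forall fun ω => (Real.exp_pos _).le)]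
        calc ∫⁻ ω, ENNReal.ofReal (Real.exp (u * η s ω i)) ∂μ
            ≤ ∫⁻ ω, ENNReal.ofReal (Real.exp (u^2/(4*lam))) *
                ENNReal.ofReal (Real.exp (lam * ‖η s ω‖ ^ 2)) ∂μ := by
              apply lintegral_mono
              intro ω
              exact le_trans (ENNReal.ofReal_le_ofReal (hptbd ω))
                (le_of_eq (ENNReal.ofReal_mul (Real.exp_pos _).le))
          _ = ENNReal.ofReal (Real.exp (u^2/(4*lam))) *
                ∫⁻ ω, ENNReal.ofReal (Real.exp (lam * ‖η s ω‖ ^ 2)) ∂μ :=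
              lintegral_const_mul' _ _ ENNReal.ofReal_ne_top
          _ < ∞ := ENNReal.mul_lt_top ENNReal.ofReal_lt_top (hAs s).lt_top
    · have hx : ‖(EuclideanSpace.single i (1:ℝ) : EVec d)‖ = 1 := by simp
      have := hηsub s (EuclideanSpace.single i (1:ℝ)) hx u
      have hip : ∀ ω, ⟪η s ω, EuclideanSpace.single i (1:ℝ)⟫ = η s ω i := by
        intro ω
        rw [EuclideanSpace.inner_single_right]
        simp
      simp_rw [hip] at this
      rwa [hvdef]
  -- per-factor bound and geometric summation
  have hfact : ∀ s ∈ Finset.range (t+1),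
      F s ≤ ENNReal.ofReal (Real.exp (8 * (lam * ρ ^ (t-s) * d) * v)) := by
    intro s _
    have ha0 : 0 ≤ lam * ρ ^ (t-s) := by positivity
    have hcoef : lam * ρ ^ (t-s) * d ≤ 1 / (4 * v) := by
      have hpow : ρ ^ (t-s) ≤ 1 := pow_le_one₀ hρ0 hρ.le
      calc lam * ρ ^ (t-s) * d ≤ lam * 1 * d := by gcongr
        _ = lam * d := by ring
        _ ≤ 1 / (4 * v) := hlamv
    exact vec_mgf_bound hd (hηmeas s) hv (hmgfall s) ha0 hcoef
  have hprodle : ∏ s ∈ Finset.range (t+1), F s ≤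
      ENNReal.ofReal (Real.exp (8 * lam * d * Cη * σ ^ 2 / (1 - ρ))) := by
    calc ∏ s ∈ Finset.range (t+1), F s
        ≤ ∏ s ∈ Finset.range (t+1),
            ENNReal.ofReal (Real.exp (8 * (lam * ρ ^ (t-s) * d) * v)) :=
          Finset.prod_le_prod' hfact
      _ = ENNReal.ofReal (Real.exp (∑ s ∈ Finset.range (t+1), 8 * (lam * ρ ^ (t-s) * d) * v)) := by
          rw [Real.exp_sum, ENNReal.ofReal_prod_of_nonneg (fun s _ => (Real.exp_pos _).le)]
      _ ≤ ENNReal.ofReal (Real.exp (8 * lam * d * Cη * σ ^ 2 / (1 - ρ))) := by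
          apply ENNReal.ofReal_le_ofReal
          apply Real.exp_le_exp.mpr
          have hsum : ∑ s ∈ Finset.range (t+1), 8 * (lam * ρ ^ (t-s) * d) * v =
              (8 * lam * d * v) * ∑ s ∈ Finset.range (t+1), ρ ^ (t-s) := by
            rw [Finset.mul_sum]
            exact Finset.sum_congr rfl fun s _ => by ring
          have hrefl : ∑ s ∈ Finset.range (t+1), ρ ^ (t-s) =
              ∑ s ∈ Finset.range (t+1), ρ ^ s := by
            simpa using Finset.sum_range_reflect (fun k => ρ ^ k) (t+1)
          have hgeom : ∑ s ∈ Finset.range (t+1), ρ ^ s ≤ 1 / (1-ρ) := by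
            rw [geom_sum_eq (by linarith : ρ ≠ 1)]
            rw [show (ρ ^ (t+1) - 1)/(ρ - 1) = (1 - ρ ^ (t+1))/(1-ρ) by
              rw [← neg_div_neg_eq]; ring_nf]
            rw [div_le_div_iff₀ h1ρ h1ρ]
            nlinarith [pow_nonneg hρ0 (t+1), h1ρ]
          rw [hsum, hrefl]
          calc (8 * lam * d * v) * ∑ s ∈ Finset.range (t+1), ρ ^ s
              ≤ (8 * lam * d * v) * (1/(1-ρ)) := by
                apply mul_le_mul_of_nonneg_left hgeom (by positivity)
            _ = 8 * lam * d * Cη * σ ^ 2 / (1 - ρ) := by rw [hvdef]; ring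
  have := ENNReal.toReal_mono ENNReal.ofReal_ne_top hprodle
  rwa [ENNReal.toReal_ofReal (Real.exp_pos _).le] at this

end
end

section
/- Let φ : ℝ → ℝ be nondecreasing, 1-Lipschitz with φ(0) = 0, let R_max > 0, and let γ ≤ 1/(2 R_max). Consider iterates a_0 = 0 and a_{τ+1} = a_τ − 2γ (φ(⟨a_τ, x_τ⟩) − b_τ) x_τ for 0 ≤ τ < T, where x_τ ∈ ℝ^d with ‖x_τ‖² ≤ R_max and b_τ ∈ ℝ with |b_τ| ≤ √R_max for every τ (this is one row of the SGD-RER iteration run on data whose squared norms are bounded by R_max). Then ‖a_τ‖ ≤ 2γ R_max τ ≤ 2γ R_max T for every 0 ≤ τ ≤ T. -/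
open Real
open scoped RealInnerProductSpace

noncomputable section

/-- One row of the SGD-RER iteration, run on data whose squared norms are
bounded by `R_max`, with step size `γ ≤ 1/(2 R_max)`, satisfies `‖a_τ‖ ≤ 2 γ R_max τ ≤ 2 γ R_max T`. -/
theorem bounded_iterates
    {d : ℕ} (φ : ℝ → ℝ) (hmono : Monotone φ) (hlip : LipschitzWith 1 φ) (h0 : φ 0 = 0)
    (Rmax : ℝ) (hR : 0 < Rmax) (γ : ℝ) (hγ0 : 0 < γ) (hγ : γ ≤ 1 / (2 * Rmax))
    (T : ℕ) (x : ℕ → EVec d) (b : ℕ → ℝ) (a : ℕ → EVec d)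
    (hx : ∀ τ, ‖x τ‖ ^ 2 ≤ Rmax)
    (hb : ∀ τ, |b τ| ≤ Real.sqrt Rmax)
    (ha0 : a 0 = 0)
    (harec : ∀ τ < T, a (τ + 1) = a τ - (2 * γ * (φ ⟪a τ, x τ⟫ - b τ)) • x τ) :
    ∀ τ ≤ T, ‖a τ‖ ≤ 2 * γ * Rmax * τ ∧ 2 * γ * Rmax * τ ≤ 2 * γ * Rmax * T := by
  have hγR : γ * Rmax ≤ 1 / 2 := by
    have h2R : (0:ℝ) < 2 * Rmax := by positivity
    calc γ * Rmax ≤ (1 / (2 * Rmax)) * Rmax := by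
          exact mul_le_mul_of_nonneg_right hγ hR.le
      _ = 1 / 2 := by field_simp
  have hmain : ∀ τ ≤ T, ‖a τ‖ ≤ 2 * γ * Rmax * τ := by
    intro τ
    induction τ with
    | zero => intro _; simp [ha0]
    | succ n ih =>
      intro hn
      have hnT : n < T := hn
      have ihn := ih (le_of_lt hnT)
      set s : ℝ := ⟪a n, x n⟫ with hs
      set p : ℝ := φ s with hp
      have habs : |p| ≤ |s| := by
        have := hlip.dist_le_mul s 0
        simpa [h0, Real.dist_eq, ← hp] using this
      have hps : p ^ 2 ≤ p * s := by
        rcases le_or_gt 0 s with hs0 | hs0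
        · have hp0 : 0 ≤ p := by
            have := hmono hs0
            simpa [h0, ← hp] using this
          have hple : p ≤ s := (le_abs_self p).trans (habs.trans_eq (abs_of_nonneg hs0))
          nlinarith
        · have hp0 : p ≤ 0 := by
            have := hmono hs0.le
            simpa [h0, ← hp] using this
          rw [abs_of_nonpos hp0, abs_of_neg hs0] at habs
          nlinarith
      -- contraction of the φ part
      have hxn := hx n
      have hxn0 : (0:ℝ) ≤ ‖x n‖ := norm_nonneg _
      have hcontr : ‖a n - (2 * γ * p) • x n‖ ≤ ‖a n‖ := by
        have hsq : ‖a n - (2 * γ * p) • x n‖ ^ 2 ≤ ‖a n‖ ^ 2 := by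
          have hexp : ‖a n - (2 * γ * p) • x n‖ ^ 2
              = ‖a n‖ ^ 2 - 2 * (2 * γ * p) * s + (2 * γ * p) ^ 2 * ‖x n‖ ^ 2 := by
            rw [norm_sub_sq_real, real_inner_smul_right, norm_smul]
            rw [← hs]
            rw [mul_pow]
            simp [Real.norm_eq_abs, sq_abs, mul_pow]
            ring
          rw [hexp]
          have h1 : (2 * γ * p) ^ 2 * ‖x n‖ ^ 2 ≤ 4 * γ ^ 2 * p ^ 2 * Rmax := by
            have : (2 * γ * p) ^ 2 = 4 * γ ^ 2 * p ^ 2 := by ring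
            rw [this]
            have h4 : (0:ℝ) ≤ 4 * γ ^ 2 * p ^ 2 := by positivity
            exact mul_le_mul_of_nonneg_left hxn h4
          nlinarith [sq_nonneg p, hγ0.le]
        have h := Real.sqrt_le_sqrt hsq
        rwa [Real.sqrt_sq (norm_nonneg _), Real.sqrt_sq (norm_nonneg _)] at h
      -- norm of x and b bounds
      have hxb : ‖x n‖ ≤ Real.sqrt Rmax := by
        have := Real.sqrt_le_sqrt hxn
        rwa [Real.sqrt_sq hxn0] at this
      have hbn := hb n
      have hsr : Real.sqrt Rmax * Real.sqrt Rmax = Rmax := Real.mul_self_sqrt hR.le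
      -- rewrite the step
      have hstep : a (n + 1) = (a n - (2 * γ * p) • x n) + (2 * γ * b n) • x n := by
        rw [harec n hnT, ← hs, ← hp]
        module
      have hbound : ‖a (n + 1)‖ ≤ ‖a n‖ + 2 * γ * Rmax := by
        rw [hstep]
        refine (norm_add_le _ _).trans ?_
        have h2 : ‖(2 * γ * b n) • x n‖ ≤ 2 * γ * Rmax := by
          rw [norm_smul, Real.norm_eq_abs]
          have h1 : |2 * γ * b n| = 2 * γ * |b n| := by
            rw [abs_mul, abs_of_nonneg (by positivity : (0:ℝ) ≤ 2 * γ)]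
          rw [h1]
          calc 2 * γ * |b n| * ‖x n‖
              ≤ 2 * γ * Real.sqrt Rmax * Real.sqrt Rmax := by
                apply mul_le_mul _ hxb hxn0 (by positivity)
                exact mul_le_mul_of_nonneg_left hbn (by positivity)
            _ = 2 * γ * Rmax := by rw [mul_assoc, hsr]
        linarith [hcontr]
      calc ‖a (n + 1)‖ ≤ ‖a n‖ + 2 * γ * Rmax := hbound
        _ ≤ 2 * γ * Rmax * n + 2 * γ * Rmax := by linarith
        _ = 2 * γ * Rmax * (n + 1 : ℕ) := by push_cast; ring
  intro τ hτ
  refine ⟨hmain τ hτ, ?_⟩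
  have : (τ:ℝ) ≤ (T:ℝ) := by exact_mod_cast hτ
  have h0' : (0:ℝ) ≤ 2 * γ * Rmax := by positivity
  exact mul_le_mul_of_nonneg_left this h0'

end
end
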